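/- Let z ∈ M and let U, V ∈ ℂ^{n+1} satisfy Σ_h U^h F_h(z) = 0 and Σ_h V^h F_h(z) = 0, and let X_U, X_V ∈ T_zM be the real tangent vectors whose complex coordinate vectors are U and V (then J X_U, J X_V ∈ T_zM as well). Then the Levi form satisfies ¼ [ h(X_U, X_V) + h(J X_U, J X_V) + i ( h(X_U, J X_V) − h(J X_U, X_V) ) ] = (1/(2 |∂F(z)|)) Σ_{h,k} U^h V̄^k F_{h k̄}(z). -/

import Mathlib

noncomputable section
open scoped BigOperators

/-- `ℂ^{n+1}`, identified with `ℝ^{2n+2}` via its real structure. -/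
abbrev E (n : ℕ) : Type := EuclideanSpace ℂ (Fin (n + 1))

/-- The standard complex structure: multiplication by `i`. -/
def J {n : ℕ} (v : E n) : E n := Complex.I • v

/-- The real inner product `⟨x, y⟩ = Re ⟪x, y⟫`. -/
def rI {n : ℕ} (x y : E n) : ℝ := (inner ℂ x y : ℂ).re

/-- The (real) tangent space at `p` of a hypersurface with unit normal `ν`. -/
def tangAt {n : ℕ} (ν : E n → E n) (p : E n) : Set (E n) := {X | rI (ν p) X = 0}

/-- `M` is a smooth embedded real hypersurface of `ℂ^{n+1}` (locally a regular zero
set of a smooth real function), oriented by the smooth unit normal field `ν`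
(extended smoothly to the ambient space). -/
def IsHypersurface {n : ℕ} (M : Set (E n)) (ν : E n → E n) : Prop :=
  ContDiff ℝ (⊤ : ℕ∞) ν ∧ (∀ p ∈ M, ‖ν p‖ = 1) ∧
    ∀ p ∈ M, ∃ (V : Set (E n)) (F : E n → ℝ), IsOpen V ∧ p ∈ V ∧
      ContDiffOn ℝ (⊤ : ℕ∞) F V ∧ (M ∩ V = {z ∈ V | F z = 0}) ∧
      ∀ z ∈ M ∩ V, ∀ X : E n, (fderiv ℝ F z X = 0 ↔ X ∈ tangAt ν z)

/-- The horizontal (maximal complex) subspace `H_p = {X ∈ T_pM : JX ∈ T_pM}`. -/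
def horizAt {n : ℕ} (ν : E n → E n) (p : E n) : Set (E n) :=
  {X | X ∈ tangAt ν p ∧ J X ∈ tangAt ν p}

/-- The second fundamental form `h(X,Y) = ⟨X, ∂_Y ν⟩`. -/
def sff {n : ℕ} (ν : E n → E n) (p : E n) (X Y : E n) : ℝ :=
  rI X (fderiv ℝ ν p Y)

/-- The family `X_1, …, X_n, J X_1, …, J X_n`. -/
def combined {n : ℕ} (X : Fin n → E n) : (Fin n ⊕ Fin n) → E n :=
  Sum.elim X (fun α => J (X α))

/-- `{X_1, …, X_n, J X_1, …, J X_n}` is an orthonormal basis of the horizontal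
space at `p` (w.r.t. the real inner product). -/
def IsHorizONB {n : ℕ} (ν : E n → E n) (p : E n) (X : Fin n → E n) : Prop :=
  (∀ α, X α ∈ horizAt ν p) ∧
  (∀ i j, rI (combined X i) (combined X j) = if i = j then 1 else 0) ∧
  (∀ Y ∈ horizAt ν p, Y ∈ Submodule.span ℝ (Set.range (combined X)))

/-- The `h`-th standard basis vector of `ℂ^{n+1}`. -/
def bvec {n : ℕ} (h : Fin (n + 1)) : E n := EuclideanSpace.single h 1

/-- The Wirtinger derivative `∂f/∂z_h = ½(∂f/∂x_h - i ∂f/∂y_h)`. -/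
def wz {n : ℕ} (f : E n → ℂ) (z : E n) (h : Fin (n + 1)) : ℂ :=
  (fderiv ℝ f z (bvec h) - Complex.I * fderiv ℝ f z (Complex.I • bvec h)) / 2

/-- The Wirtinger derivative `∂f/∂z̄_h = ½(∂f/∂x_h + i ∂f/∂y_h)`. -/
def wzb {n : ℕ} (f : E n → ℂ) (z : E n) (h : Fin (n + 1)) : ℂ :=
  (fderiv ℝ f z (bvec h) + Complex.I * fderiv ℝ f z (Complex.I • bvec h)) / 2

/-- `F_h = ∂F/∂z_h` for a real-valued `F`. -/
def Fz {n : ℕ} (F : E n → ℝ) (z : E n) (h : Fin (n + 1)) : ℂ :=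
  wz (fun w => (F w : ℂ)) z h

/-- `F_{h k̄} = ∂²F/∂z_h ∂z̄_k`. -/
def Fzzb {n : ℕ} (F : E n → ℝ) (z : E n) (h k : Fin (n + 1)) : ℂ :=
  wz (fun w => wzb (fun w' => (F w' : ℂ)) w k) z h

/-- `|∂F| = (Σ_h F_h F_h̄)^{1/2}`. -/
def pdF {n : ℕ} (F : E n → ℝ) (z : E n) : ℝ :=
  Real.sqrt (∑ h, Complex.normSq (Fz F z h))

/-- The unit normal `ν = ∇F/|∇F|`, whose complex coordinate vector is
`(F_h̄ / |∂F|)_h`. -/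
def nuF {n : ℕ} (F : E n → ℝ) (z : E n) : E n :=
  (WithLp.equiv 2 _).symm fun h => (starRingEnd ℂ) (Fz F z h) / (pdF F z : ℂ)

open Complex in
lemma decompE {n : ℕ} (Y : E n) :
    Y = ∑ k, (((Y k).re • bvec k : E n) + (Y k).im • (Complex.I • bvec k)) := by
  ext j
  rw [WithLp.ofLp_sum, Finset.sum_apply]
  rw [Finset.sum_eq_single j]
  · simp [bvec, PiLp.add_apply, PiLp.smul_apply, EuclideanSpace.single_apply, Complex.ext_iff]
  · intro b _ hb
    simp [bvec, PiLp.add_apply, PiLp.smul_apply, EuclideanSpace.single_apply, Ne.symm hb]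
  · simp

open Complex in
lemma conjlin {n : ℕ} (T : E n →L[ℝ] ℂ) (Y : E n) :
    T Y + Complex.I * T (Complex.I • Y)
      = ∑ k, (starRingEnd ℂ) (Y k) * (T (bvec k) + Complex.I * T (Complex.I • bvec k)) := by
  set a : Fin (n + 1) → ℝ := fun k => (Y k).re with ha
  set b : Fin (n + 1) → ℝ := fun k => (Y k).im with hb
  have hc : ∀ k, (starRingEnd ℂ) (Y k) = (a k : ℂ) - b k * Complex.I := by
    intro k; simp [ha, hb, Complex.ext_iff]
  have hdec : Y = ∑ k, ((a k • bvec k : E n) + b k • (Complex.I • bvec k)) := decompE Y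
  have h2 : (Complex.I • Y : E n) = ∑ k, ((a k • (Complex.I • bvec k) : E n)
      + b k • ((-1 : ℝ) • bvec k)) := by
    calc (Complex.I • Y : E n)
        = Complex.I • ∑ k, ((a k • bvec k : E n) + b k • (Complex.I • bvec k)) := by rw [← hdec]
      _ = _ := by
        rw [Finset.smul_sum]
        refine Finset.sum_congr rfl fun k _ => ?_
        rw [smul_add]
        congr 1
        · rw [smul_comm]
        · rw [smul_comm]
          congr 1
          rw [smul_smul, Complex.I_mul_I]
          ext j; simp
  simp only [hc]
  rw [h2, hdec]
  rw [map_sum, map_sum, Finset.mul_sum, ← Finset.sum_add_distrib]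
  refine Finset.sum_congr rfl fun k _ => ?_
  rw [map_add, map_add]
  simp only [T.map_smul, neg_one_smul, map_neg, Complex.real_smul, smul_eq_mul]
  ring_nf
  rw [Complex.I_sq]
  ring
open Complex in
lemma im_fderiv_zero {n : ℕ} {f : E n → ℂ} (hf : ∀ x, (f x).im = 0) (w v : E n) :
    (fderiv ℝ f w v).im = 0 := by
  by_cases hd : DifferentiableAt ℝ f w
  · have h1 : fderiv ℝ (fun x => Complex.imCLM (f x)) w
        = Complex.imCLM.comp (fderiv ℝ f w) := by
      rw [fderiv_comp' w Complex.imCLM.differentiableAt hd, Complex.imCLM.fderiv]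
    have h2 : (fun x : E n => Complex.imCLM (f x)) = fun _ => (0 : ℝ) := by
      funext x; simpa using hf x
    rw [h2, fderiv_fun_const] at h1
    have := congrFun (congrArg (fun (L : E n →L[ℝ] ℝ) => (L : E n → ℝ)) h1.symm) v
    simpa using this
  · rw [fderiv_zero_of_not_differentiableAt hd]; simp

lemma imDcF {n : ℕ} (F : E n → ℝ) (w v : E n) :
    (fderiv ℝ (fun x => ((F x : ℝ) : ℂ)) w v).im = 0 := by
  by_cases hd : DifferentiableAt ℝ (fun x => ((F x : ℝ) : ℂ)) w
  · have h1 : fderiv ℝ (fun x => Complex.imCLM ((F x : ℝ) : ℂ)) w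
        = Complex.imCLM.comp (fderiv ℝ (fun x => ((F x : ℝ) : ℂ)) w) := by
      rw [fderiv_comp' w Complex.imCLM.differentiableAt hd, Complex.imCLM.fderiv]
    have h2 : (fun x : E n => Complex.imCLM ((F x : ℝ) : ℂ)) = fun _ => (0 : ℝ) := by
      funext x; simp
    rw [h2, fderiv_fun_const] at h1
    have := congrFun (congrArg (fun (L : E n →L[ℝ] ℝ) => (L : E n → ℝ)) h1.symm) v
    simpa using this
  · rw [fderiv_zero_of_not_differentiableAt hd]; simp
section Deriv
variable {n : ℕ} {F : E n → ℝ} {z : E n}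

/-- abbreviation for the complexified F -/
local notation "cF" => (fun w : E n => ((F w : ℝ) : ℂ))

open Complex

lemma hD1d (hc2 : ContDiffAt ℝ 2 cF z) : DifferentiableAt ℝ (fderiv ℝ cF) z :=
  ((hc2.fderiv_right (m := 1) (by norm_num)).differentiableAt (by norm_num))

lemma hKd (hc2 : ContDiffAt ℝ 2 cF z) (v : E n) :
    DifferentiableAt ℝ (fun w => fderiv ℝ cF w v) z :=
  (ContinuousLinearMap.apply ℝ ℂ v).differentiableAt.comp z (hD1d hc2)

lemma hKeq (hc2 : ContDiffAt ℝ 2 cF z) (v : E n) :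
    fderiv ℝ (fun w => fderiv ℝ cF w v) z
      = (ContinuousLinearMap.apply ℝ ℂ v).comp (fderiv ℝ (fderiv ℝ cF) z) := by
  exact (((ContinuousLinearMap.apply ℝ ℂ v).hasFDerivAt).comp z
    (hD1d hc2).hasFDerivAt).fderiv

lemma hKsymm (hc2 : ContDiffAt ℝ 2 cF z) (v y : E n) :
    fderiv ℝ (fun w => fderiv ℝ cF w v) z y = fderiv ℝ (fun w => fderiv ℝ cF w y) z v := by
  rw [hKeq hc2, hKeq hc2]
  have hs : IsSymmSndFDerivAt ℝ cF z := hc2.isSymmSndFDerivAt (by simp)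
  simpa using hs y v

lemma hKim (hc2 : ContDiffAt ℝ 2 cF z) (v y : E n) :
    (fderiv ℝ (fun w => fderiv ℝ cF w v) z y).im = 0 :=
  im_fderiv_zero (fun x => imDcF F x v) z y

end Deriv
section Deriv2
variable {n : ℕ} {F : E n → ℝ} {z : E n}

local notation "cF" => (fun w : E n => ((F w : ℝ) : ℂ))

open Complex

lemma gdef (h : Fin (n + 1)) : (fun w => Fz F w h)
    = fun w => (2 : ℂ)⁻¹ * (fderiv ℝ cF w (bvec h)
        - Complex.I * fderiv ℝ cF w (Complex.I • bvec h)) := by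
  funext w
  show (fderiv ℝ cF w (bvec h) - Complex.I * fderiv ℝ cF w (Complex.I • bvec h)) / 2 = _
  rw [div_eq_inv_mul]

lemma hgd (hc2 : ContDiffAt ℝ 2 cF z) (h : Fin (n + 1)) :
    DifferentiableAt ℝ (fun w => Fz F w h) z := by
  rw [gdef]
  exact ((hKd hc2 (bvec h)).sub
    ((hKd hc2 (Complex.I • bvec h)).const_mul Complex.I)).const_mul _

lemma hT (hc2 : ContDiffAt ℝ 2 cF z) (h : Fin (n + 1)) (Y : E n) :
    fderiv ℝ (fun w => Fz F w h) z Y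
      = (2 : ℂ)⁻¹ * (fderiv ℝ (fun w => fderiv ℝ cF w (bvec h)) z Y
          - Complex.I * fderiv ℝ (fun w => fderiv ℝ cF w (Complex.I • bvec h)) z Y) := by
  rw [gdef, fderiv_const_mul (((hKd hc2 (bvec h)).fun_sub
      ((hKd hc2 (Complex.I • bvec h)).const_mul Complex.I))),
    fderiv_fun_sub (hKd hc2 (bvec h)) ((hKd hc2 (Complex.I • bvec h)).const_mul Complex.I),
    fderiv_const_mul (hKd hc2 (Complex.I • bvec h))]
  simp

lemma alg_conj (P Q R S : ℂ) (hP : P.im = 0) (hQ : Q.im = 0) (hR : R.im = 0) (hS : S.im = 0) :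
    (2 : ℂ)⁻¹ * (P - Complex.I * Q) + Complex.I * ((2 : ℂ)⁻¹ * (R - Complex.I * S))
      = (starRingEnd ℂ) ((2 : ℂ)⁻¹ * (P - Complex.I * R)
          + Complex.I * ((2 : ℂ)⁻¹ * (Q - Complex.I * S))) := by
  rw [map_add, map_mul, map_mul, map_mul, map_sub, map_sub, map_mul, map_mul,
    Complex.conj_I, Complex.conj_eq_iff_im.mpr hP, Complex.conj_eq_iff_im.mpr hQ,
    Complex.conj_eq_iff_im.mpr hR, Complex.conj_eq_iff_im.mpr hS, map_inv₀, Complex.conj_ofNat]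
  ring

lemma phi_eq_conj (hc2 : ContDiffAt ℝ 2 cF z) (h k : Fin (n + 1)) :
    fderiv ℝ (fun w => Fz F w h) z (bvec k)
        + Complex.I * fderiv ℝ (fun w => Fz F w h) z (Complex.I • bvec k)
      = (starRingEnd ℂ) (fderiv ℝ (fun w => Fz F w k) z (bvec h)
        + Complex.I * fderiv ℝ (fun w => Fz F w k) z (Complex.I • bvec h)) := by
  rw [hT hc2, hT hc2, hT hc2, hT hc2]
  rw [hKsymm hc2 (bvec k) (bvec h), hKsymm hc2 (bvec k) (Complex.I • bvec h),
    hKsymm hc2 (Complex.I • bvec k) (bvec h), hKsymm hc2 (Complex.I • bvec k) (Complex.I • bvec h)]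
  exact alg_conj _ _ _ _ (hKim hc2 _ _) (hKim hc2 _ _) (hKim hc2 _ _) (hKim hc2 _ _)

lemma two_Fzzb (hc2 : ContDiffAt ℝ 2 cF z) (h k : Fin (n + 1)) :
    fderiv ℝ (fun w => Fz F w h) z (bvec k)
        + Complex.I * fderiv ℝ (fun w => Fz F w h) z (Complex.I • bvec k)
      = 2 * Fzzb F z h k := by
  have hfun : (fun w => wzb cF w k) = fun w => (starRingEnd ℂ) (Fz F w k) := by
    funext w
    have hA := imDcF F w (bvec k)
    have hB := imDcF F w (Complex.I • bvec k)
    show (fderiv ℝ cF w (bvec k) + Complex.I * fderiv ℝ cF w (Complex.I • bvec k)) / 2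
      = (starRingEnd ℂ) ((fderiv ℝ cF w (bvec k)
          - Complex.I * fderiv ℝ cF w (Complex.I • bvec k)) / 2)
    rw [map_div₀, map_sub, map_mul, Complex.conj_I, Complex.conj_eq_iff_im.mpr hA,
      Complex.conj_eq_iff_im.mpr hB, Complex.conj_ofNat]
    ring
  have hfun2 : (fun w => (starRingEnd ℂ) (Fz F w k))
      = fun w => Complex.conjCLE (Fz F w k) := by
    funext w; simp
  have hD : fderiv ℝ (fun w => (starRingEnd ℂ) (Fz F w k)) z
      = (Complex.conjCLE : ℂ →L[ℝ] ℂ).comp (fderiv ℝ (fun w => Fz F w k) z) := by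
    rw [hfun2, fderiv_comp' z Complex.conjCLE.differentiableAt (hgd hc2 k),
      Complex.conjCLE.fderiv]
  have hFzzb : Fzzb F z h k
      = ((starRingEnd ℂ) (fderiv ℝ (fun w => Fz F w k) z (bvec h))
          - Complex.I * (starRingEnd ℂ) (fderiv ℝ (fun w => Fz F w k) z (Complex.I • bvec h))) / 2 := by
    show wz (fun w => wzb cF w k) z h = _
    rw [hfun]
    show (fderiv ℝ (fun w => (starRingEnd ℂ) (Fz F w k)) z (bvec h)
        - Complex.I * fderiv ℝ (fun w => (starRingEnd ℂ) (Fz F w k)) z (Complex.I • bvec h)) / 2 = _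
    rw [hD]
    simp
  rw [phi_eq_conj hc2 h k, hFzzb]
  set a := fderiv ℝ (fun w => Fz F w k) z (bvec h)
  set b := fderiv ℝ (fun w => Fz F w k) z (Complex.I • bvec h)
  simp [Complex.ext_iff]
  constructor <;> ring

end Deriv2
section Deriv3
variable {n : ℕ} {F : E n → ℝ} {z : E n}

local notation "cF" => (fun w : E n => ((F w : ℝ) : ℂ))

open Complex

lemma hconjg (hc2 : ContDiffAt ℝ 2 cF z) (k : Fin (n + 1)) :
    fderiv ℝ (fun w => (starRingEnd ℂ) (Fz F w k)) z
      = (Complex.conjCLE : ℂ →L[ℝ] ℂ).comp (fderiv ℝ (fun w => Fz F w k) z) := by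
  have hfun2 : (fun w => (starRingEnd ℂ) (Fz F w k))
      = fun w => Complex.conjCLE (Fz F w k) := by
    funext w; simp
  rw [hfun2, fderiv_comp' z Complex.conjCLE.differentiableAt (hgd hc2 k),
    Complex.conjCLE.fderiv]

lemma hsd (hc2 : ContDiffAt ℝ 2 cF z) :
    DifferentiableAt ℝ (fun w => ∑ h, Complex.normSq (Fz F w h)) z := by
  apply DifferentiableAt.fun_sum
  intro h _
  have hre : DifferentiableAt ℝ (fun w => (Fz F w h).re) z :=
    Complex.reCLM.differentiableAt.comp z (hgd hc2 h)
  have him : DifferentiableAt ℝ (fun w => (Fz F w h).im) z :=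
    Complex.imCLM.differentiableAt.comp z (hgd hc2 h)
  have : (fun w => Complex.normSq (Fz F w h))
      = fun w => (Fz F w h).re * (Fz F w h).re + (Fz F w h).im * (Fz F w h).im := by
    funext w; rw [Complex.normSq_apply]
  rw [this]
  exact (hre.mul hre).add (him.mul him)

lemma hpd (hc2 : ContDiffAt ℝ 2 cF z) (hpz : pdF F z ≠ 0) :
    DifferentiableAt ℝ (pdF F) z := by
  have hs0 : (∑ h, Complex.normSq (Fz F z h)) ≠ 0 := by
    intro h0
    apply hpz
    show Real.sqrt _ = 0
    rw [h0, Real.sqrt_zero]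
  have h1 : DifferentiableAt ℝ Real.sqrt (∑ h, Complex.normSq (Fz F z h)) :=
    (Real.contDiffAt_sqrt (n := 1) hs0).differentiableAt one_ne_zero
  exact h1.comp z (hsd hc2)

lemma hqd (hc2 : ContDiffAt ℝ 2 cF z) (hpz : pdF F z ≠ 0) :
    DifferentiableAt ℝ (fun w => (((pdF F w : ℝ) : ℂ))⁻¹) z := by
  have : (fun w => (((pdF F w : ℝ) : ℂ))⁻¹) = fun w => ((((pdF F w)⁻¹ : ℝ) : ℂ)) := by
    funext w; rw [Complex.ofReal_inv]
  rw [this]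
  exact Complex.ofRealCLM.differentiableAt.comp z ((hpd hc2 hpz).inv hpz)

lemma nuL (hc2 : ContDiffAt ℝ 2 cF z) (hpz : pdF F z ≠ 0) (Y : E n) (h : Fin (n + 1)) :
    fderiv ℝ (nuF F) z Y h
      = (starRingEnd ℂ) (Fz F z h) * fderiv ℝ (fun w => (((pdF F w : ℝ) : ℂ))⁻¹) z Y
        + (((pdF F z : ℝ) : ℂ))⁻¹ * (starRingEnd ℂ) (fderiv ℝ (fun w => Fz F w h) z Y) := by
  set q : E n → ℂ := fun w => (((pdF F w : ℝ) : ℂ))⁻¹ with hq_def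
  set Q : E n →L[ℝ] ℂ := fderiv ℝ q z with hQ_def
  set T : Fin (n + 1) → E n →L[ℝ] ℂ := fun k => fderiv ℝ (fun w => Fz F w k) z with hT_def
  have hqq : HasFDerivAt q Q z := (hqd hc2 hpz).hasFDerivAt
  have hconj : ∀ k, HasFDerivAt (fun w => (starRingEnd ℂ) (Fz F w k))
      ((Complex.conjCLE : ℂ →L[ℝ] ℂ).comp (T k)) z := by
    intro k
    exact (Complex.conjCLE : ℂ →L[ℝ] ℂ).hasFDerivAt.comp z (hgd hc2 k).hasFDerivAt
  set L : Fin (n + 1) → E n →L[ℝ] ℂ := fun k =>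
    (starRingEnd ℂ) (Fz F z k) • Q + q z • ((Complex.conjCLE : ℂ →L[ℝ] ℂ).comp (T k)) with hL_def
  have hch : ∀ k, HasFDerivAt (fun w => (starRingEnd ℂ) (Fz F w k) * q w) (L k) z :=
    fun k => (hconj k).mul hqq
  have hpi : HasFDerivAt (fun w => (fun k => (starRingEnd ℂ) (Fz F w k) * q w))
      (ContinuousLinearMap.pi L) z := hasFDerivAt_pi.2 fun k => hch k
  set e := PiLp.continuousLinearEquiv 2 ℝ (fun _ : Fin (n + 1) => ℂ) with he_def
  have hnu : HasFDerivAt (nuF F)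
      (((e.symm : (∀ _ : Fin (n + 1), ℂ) →L[ℝ] E n)).comp (ContinuousLinearMap.pi L)) z := by
    have h1 := ((e.symm : (∀ _ : Fin (n + 1), ℂ) →L[ℝ] E n)).hasFDerivAt.comp z hpi
    have h2 : nuF F = fun w =>
        (e.symm : (∀ _ : Fin (n + 1), ℂ) →L[ℝ] E n) (fun k => (starRingEnd ℂ) (Fz F w k) * q w) := by
      funext w
      show (WithLp.equiv 2 _).symm _ = _
      have : (fun k => (starRingEnd ℂ) (Fz F w k) / ((pdF F w : ℝ) : ℂ))
          = fun k => (starRingEnd ℂ) (Fz F w k) * q w := by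
        funext k; rw [div_eq_mul_inv]
      rw [this]
      rfl
    rw [h2]
    exact h1
  rw [hnu.fderiv]
  show ((e.symm : (∀ _ : Fin (n + 1), ℂ) →L[ℝ] E n) ((ContinuousLinearMap.pi L) Y)) h = _
  have : ((e.symm : (∀ _ : Fin (n + 1), ℂ) →L[ℝ] E n) ((ContinuousLinearMap.pi L) Y)) h
      = (ContinuousLinearMap.pi L) Y h := rfl
  rw [this]
  simp only [ContinuousLinearMap.pi_apply, hL_def, ContinuousLinearMap.add_apply,
    ContinuousLinearMap.smul_apply, ContinuousLinearMap.coe_comp', Function.comp_apply,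
    smul_eq_mul]
  show _ * _ + _ * Complex.conjCLE ((T h) Y) = _
  rw [Complex.conjCLE_apply]

end Deriv3

theorem stmt5 {n : ℕ} (Ω : Set (E n)) (hΩ : IsOpen Ω)
    (F : E n → ℝ) (hF : ContDiffOn ℝ (⊤ : ℕ∞) F Ω)
    (hreg : ∀ z ∈ Ω, F z = 0 → pdF F z ≠ 0)
    (z : E n) (hz : z ∈ Ω) (hz0 : F z = 0)
    (U V : Fin (n + 1) → ℂ)
    (hU : ∑ h, U h * Fz F z h = 0) (hV : ∑ h, V h * Fz F z h = 0)
    (XU XV : E n) (hXU : XU = (WithLp.equiv 2 _).symm U) (hXV : XV = (WithLp.equiv 2 _).symm V) :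
    (((sff (nuF F) z XU XV + sff (nuF F) z (J XU) (J XV) : ℝ) : ℂ)
        + Complex.I * ((sff (nuF F) z XU (J XV) - sff (nuF F) z (J XU) XV : ℝ) : ℂ)) / 4
      = (1 / (2 * (pdF F z : ℂ))) * ∑ h, ∑ k, U h * (starRingEnd ℂ) (V k) * Fzzb F z h k := by
  classical
  have hFz2 : ContDiffAt ℝ 2 F z := (hF.contDiffAt (hΩ.mem_nhds hz)).of_le (WithTop.coe_le_coe.mpr le_top)
  have hc2 : ContDiffAt ℝ 2 (fun w : E n => ((F w : ℝ) : ℂ)) z :=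
    (Complex.ofRealCLM.contDiff (n := 2)).contDiffAt.comp z hFz2
  have hpz : pdF F z ≠ 0 := hreg z hz hz0
  have hpzC : ((pdF F z : ℝ) : ℂ) ≠ 0 := Complex.ofReal_ne_zero.mpr hpz
  set T : Fin (n + 1) → E n →L[ℝ] ℂ := fun k => fderiv ℝ (fun w => Fz F w k) z with hT_def
  set Q : E n →L[ℝ] ℂ := fderiv ℝ (fun w => (((pdF F w : ℝ) : ℂ))⁻¹) z with hQ_def
  set L : E n →L[ℝ] E n := fderiv ℝ (nuF F) z with hL_def
  have hLh : ∀ (Y : E n) (h : Fin (n + 1)), L Y h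
      = (starRingEnd ℂ) (Fz F z h) * Q Y + (((pdF F z : ℝ) : ℂ))⁻¹ * (starRingEnd ℂ) (T h Y) :=
    fun Y h => nuL hc2 hpz Y h
  -- coordinates
  have hXUh : ∀ h, XU h = U h := fun h => by rw [hXU]; rfl
  have hXVh : ∀ h, XV h = V h := fun h => by rw [hXV]; rfl
  have hJ : ∀ (X : E n) (h : Fin (n + 1)), (J X) h = Complex.I * X h := fun X h => rfl
  -- sff expansion
  have hsff : ∀ X Y : E n, sff (nuF F) z X Y = (∑ h, (starRingEnd ℂ) (X h) * (L Y h)).re := by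
    intro X Y
    show ((inner ℂ X (L Y) : ℂ)).re = _
    rw [PiLp.inner_apply]
    simp [RCLike.inner_apply]
    exact Finset.sum_congr rfl fun _ _ => by ring
  set c1 : ℂ := ∑ h, (starRingEnd ℂ) (U h) * (L XV h) with hc1_def
  set c2 : ℂ := ∑ h, (starRingEnd ℂ) (U h) * (L (J XV) h) with hc2_def
  have hs1 : sff (nuF F) z XU XV = c1.re := by
    rw [hsff]; congr 1
    exact Finset.sum_congr rfl fun h _ => by rw [hXUh]
  have hs3 : sff (nuF F) z XU (J XV) = c2.re := by
    rw [hsff]; congr 1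
    exact Finset.sum_congr rfl fun h _ => by rw [hXUh]
  have hs2 : sff (nuF F) z (J XU) (J XV) = c2.im := by
    rw [hsff]
    have : (∑ h, (starRingEnd ℂ) ((J XU) h) * (L (J XV) h)) = -Complex.I * c2 := by
      rw [hc2_def, Finset.mul_sum]
      refine Finset.sum_congr rfl fun h _ => ?_
      rw [hJ, hXUh, map_mul, Complex.conj_I]
      ring
    rw [this]
    simp
  have hs4 : sff (nuF F) z (J XU) XV = c1.im := by
    rw [hsff]
    have : (∑ h, (starRingEnd ℂ) ((J XU) h) * (L XV h)) = -Complex.I * c1 := by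
      rw [hc1_def, Finset.mul_sum]
      refine Finset.sum_congr rfl fun h _ => ?_
      rw [hJ, hXUh, map_mul, Complex.conj_I]
      ring
    rw [this]
    simp
  -- key identity
  have hKI : (starRingEnd ℂ) c1 + Complex.I * (starRingEnd ℂ) c2
      = (((pdF F z : ℝ) : ℂ))⁻¹
          * ∑ h, U h * ∑ k, (starRingEnd ℂ) (V k) * (2 * Fzzb F z h k) := by
    have e1 : (starRingEnd ℂ) c1 + Complex.I * (starRingEnd ℂ) c2
        = ∑ h, U h * ((starRingEnd ℂ) (L XV h) + Complex.I * (starRingEnd ℂ) (L (J XV) h)) := by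
      rw [hc1_def, hc2_def, map_sum, map_sum, Finset.mul_sum, ← Finset.sum_add_distrib]
      refine Finset.sum_congr rfl fun h _ => ?_
      rw [map_mul, map_mul, Complex.conj_conj]
      ring
    have e2 : ∀ (Y : E n) (h : Fin (n + 1)), (starRingEnd ℂ) (L Y h)
        = Fz F z h * (starRingEnd ℂ) (Q Y) + (((pdF F z : ℝ) : ℂ))⁻¹ * T h Y := by
      intro Y h
      rw [hLh, map_add, map_mul, map_mul, Complex.conj_conj, map_inv₀, Complex.conj_ofReal,
        Complex.conj_conj]
    have e4 : ∀ h, T h XV + Complex.I * T h (Complex.I • XV)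
        = ∑ k, (starRingEnd ℂ) (V k) * (2 * Fzzb F z h k) := by
      intro h
      rw [conjlin (T h) XV]
      refine Finset.sum_congr rfl fun k _ => ?_
      rw [hXVh, two_Fzzb hc2 h k]
    rw [e1]
    have e5 : ∀ h, U h * ((starRingEnd ℂ) (L XV h) + Complex.I * (starRingEnd ℂ) (L (J XV) h))
        = (U h * Fz F z h) * ((starRingEnd ℂ) (Q XV) + Complex.I * (starRingEnd ℂ) (Q (J XV)))
          + (((pdF F z : ℝ) : ℂ))⁻¹ * (U h * ∑ k, (starRingEnd ℂ) (V k) * (2 * Fzzb F z h k)) := by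
      intro h
      rw [e2, e2, ← e4 h, show (J XV : E n) = Complex.I • XV from rfl]
      show _ = _ + (((pdF F z : ℝ) : ℂ))⁻¹ * (U h * (T h XV + Complex.I * T h (Complex.I • XV)))
      ring
    rw [Finset.sum_congr rfl fun h _ => e5 h]
    rw [Finset.sum_add_distrib, ← Finset.sum_mul, hU, zero_mul, zero_add, ← Finset.mul_sum]
  -- finish
  have hnum : (((sff (nuF F) z XU XV + sff (nuF F) z (J XU) (J XV) : ℝ) : ℂ)
        + Complex.I * ((sff (nuF F) z XU (J XV) - sff (nuF F) z (J XU) XV : ℝ) : ℂ))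
      = (starRingEnd ℂ) c1 + Complex.I * (starRingEnd ℂ) c2 := by
    rw [hs1, hs2, hs3, hs4]
    simp [Complex.ext_iff]
    try constructor <;> ring
    try ring
  have hsum : ∑ h, U h * ∑ k, (starRingEnd ℂ) (V k) * (2 * Fzzb F z h k)
      = 2 * ∑ h, ∑ k, U h * (starRingEnd ℂ) (V k) * Fzzb F z h k := by
    rw [Finset.mul_sum]
    refine Finset.sum_congr rfl fun h _ => ?_
    rw [Finset.mul_sum, Finset.mul_sum]
    refine Finset.sum_congr rfl fun k _ => ?_
    ring
  rw [hnum, hKI, hsum]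
  field_simp
  ring
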